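/- Let x_- < x_+ and suppose h_w(t, x) = h_eq(x) + δ(t) with h_eq continuous positive and δ differentiable with h_eq + δ > 0. Define ⟨f⟩(t) = (∫_{x_-}^{x_+} f/h_w(t,·))/(∫_{x_-}^{x_+} 1/h_w(t,·)). Then d/dt ⟨x⟩(t) = −(⟨x/h_w⟩ − ⟨x⟩⟨1/h_w⟩) δ̇(t), where ⟨x/h_w⟩ and ⟨1/h_w⟩ denote the weighted averages (with weight 1/h_w) of the functions x ↦ x/h_w(t,x) and x ↦ 1/h_w(t,x). -/

import Mathlib

open MeasureTheory intervalIntegral Set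

lemma aux_deriv (a b : ℝ) (hab : a < b) (heq g : ℝ → ℝ)
    (hcont : ContinuousOn heq (Set.Icc a b)) (hg : ContinuousOn g (Set.Icc a b))
    (y₀ c : ℝ) (hc : 0 < c) (hlb : ∀ x ∈ Set.Icc a b, c ≤ heq x + y₀) :
    HasDerivAt (fun y => ∫ x in a..b, g x / (heq x + y))
      (∫ x in a..b, -(g x / (heq x + y₀) / (heq x + y₀))) y₀ := by
  -- bound on |g|
  obtain ⟨M, hM⟩ : ∃ M, ∀ x ∈ Set.Icc a b, |g x| ≤ M := by
    obtain ⟨M, hM⟩ := (isCompact_Icc.image_of_continuousOn hg).isBounded.subset_closedBall 0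
    exact ⟨M, fun x hx => by simpa [Real.norm_eq_abs] using hM ⟨x, hx, rfl⟩⟩
  have hsub : Set.uIoc a b ⊆ Set.Icc a b := by
    rw [Set.uIoc_of_le hab.le]; exact Set.Ioc_subset_Icc_self
  have hne : ∀ x ∈ Set.Icc a b, ∀ y ∈ Metric.ball y₀ (c/2), 0 < heq x + y := by
    intro x hx y hy
    have : |y - y₀| < c/2 := by simpa [Real.dist_eq] using hy
    have := hlb x hx
    cases abs_lt.mp ‹|y - y₀| < c/2› with
    | intro h1 h2 => linarith
  have key := intervalIntegral.hasDerivAt_integral_of_dominated_loc_of_deriv_le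
    (F := fun y x => g x / (heq x + y))
    (F' := fun y x => -(g x / (heq x + y) / (heq x + y)))
    (x₀ := y₀) (bound := fun _ => M / (c/2) / (c/2) + 1)
    (μ := volume) (a := a) (b := b)
    (Metric.ball_mem_nhds y₀ (half_pos hc))
    ?meas ?int ?meas' ?bound ?bint ?diff
  · exact key.2
  case meas =>
    filter_upwards [Metric.ball_mem_nhds y₀ (half_pos hc)] with y hy
    apply ContinuousOn.aestronglyMeasurable _ measurableSet_uIoc
    apply ContinuousOn.mono _ hsub
    exact hg.div (hcont.add continuousOn_const)
      (fun x hx => (hne x hx y hy).ne')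
  case int =>
    apply ContinuousOn.intervalIntegrable
    rw [Set.uIcc_of_le hab.le]
    exact hg.div (hcont.add continuousOn_const)
      (fun x hx => (hne x hx y₀ (by simpa using half_pos hc)).ne')
  case meas' =>
    apply ContinuousOn.aestronglyMeasurable _ measurableSet_uIoc
    apply ContinuousOn.mono _ hsub
    exact ((hg.div (hcont.add continuousOn_const)
      (fun x hx => (hne x hx y₀ (by simpa using half_pos hc)).ne')).div
      (hcont.add continuousOn_const)
      (fun x hx => (hne x hx y₀ (by simpa using half_pos hc)).ne')).neg
  case bound =>
    apply Filter.Eventually.of_forall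
    intro x hx y hy
    have hx' := hsub hx
    have h1 : c/2 ≤ heq x + y := by
      have : |y - y₀| < c/2 := by simpa [Real.dist_eq] using hy
      have := hlb x hx'
      cases abs_lt.mp ‹|y - y₀| < c/2› with
      | intro h1 h2 => linarith
    have h0 : 0 < heq x + y := lt_of_lt_of_le (half_pos hc) h1
    rw [norm_neg, Real.norm_eq_abs, abs_div, abs_div, abs_of_pos h0]
    have hMnn : 0 ≤ M := le_trans (abs_nonneg _) (hM x hx')
    calc |g x| / (heq x + y) / (heq x + y)
        ≤ M / (c/2) / (c/2) := by
          gcongr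
          · exact hM x hx'
      _ ≤ M / (c/2) / (c/2) + 1 := by linarith
  case bint => exact intervalIntegrable_const
  case diff =>
    apply Filter.Eventually.of_forall
    intro x hx y hy
    have h0 : 0 < heq x + y := hne x (hsub hx) y hy
    have : HasDerivAt (fun y => heq x + y) 1 y := by
      simpa using (hasDerivAt_id y).const_add (heq x)
    have hd := (hasDerivAt_const y (g x)).div this h0.ne'
    refine hd.congr_deriv ?_
    simp only [zero_mul, zero_sub, mul_one, sq, neg_div, div_div]
theorem stmt_9 (a b : ℝ) (hab : a < b) (heq : ℝ → ℝ) (δ δ' : ℝ → ℝ)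
    (hcont : ContinuousOn heq (Set.Icc a b))
    (hδ : ∀ t, HasDerivAt δ (δ' t) t)
    (hpos : ∀ t, ∀ x ∈ Set.Icc a b, 0 < heq x + δ t) :
    ∀ t, HasDerivAt
      (fun s => (∫ x in a..b, x / (heq x + δ s)) /
        (∫ x in a..b, 1 / (heq x + δ s)))
      (-(((∫ x in a..b, (x / (heq x + δ t)) / (heq x + δ t)) /
            (∫ x in a..b, 1 / (heq x + δ t)))
          - ((∫ x in a..b, x / (heq x + δ t)) / (∫ x in a..b, 1 / (heq x + δ t)))
            * ((∫ x in a..b, (1 / (heq x + δ t)) / (heq x + δ t)) /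
                (∫ x in a..b, 1 / (heq x + δ t))))
        * δ' t) t := by
  intro t
  -- positive lower bound on heq + δ t over Icc
  obtain ⟨x₀, hx₀, hmin⟩ :=
    isCompact_Icc.exists_isMinOn (Set.nonempty_Icc.mpr hab.le)
      ((hcont.add continuousOn_const) : ContinuousOn (fun x => heq x + δ t) (Set.Icc a b))
  set c : ℝ := heq x₀ + δ t with hcdef
  have hc : 0 < c := hpos t x₀ hx₀
  have hlb : ∀ x ∈ Set.Icc a b, c ≤ heq x + δ t := fun x hx => hmin hx
  -- the two parametric integrals as functions of y
  have hN := aux_deriv a b hab heq id hcont continuousOn_id (δ t) c hc hlb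
  have hD := aux_deriv a b hab heq (fun _ => 1) hcont continuousOn_const (δ t) c hc hlb
  -- chain rule with δ
  have hNc : HasDerivAt (fun s => ∫ x in a..b, x / (heq x + δ s))
      ((∫ x in a..b, -(x / (heq x + δ t) / (heq x + δ t))) * δ' t) t :=
    HasDerivAt.comp t hN (hδ t)
  have hDc : HasDerivAt (fun s => ∫ x in a..b, 1 / (heq x + δ s))
      ((∫ x in a..b, -(1 / (heq x + δ t) / (heq x + δ t))) * δ' t) t :=
    HasDerivAt.comp t hD (hδ t)
  -- denominator positivity
  have hDpos : 0 < ∫ x in a..b, 1 / (heq x + δ t) := by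
    apply intervalIntegral.intervalIntegral_pos_of_pos_on
    · apply ContinuousOn.intervalIntegrable
      rw [Set.uIcc_of_le hab.le]
      exact continuousOn_const.div (hcont.add continuousOn_const)
        (fun x hx => (hpos t x hx).ne')
    · intro x hx
      exact div_pos one_pos (hpos t x (Set.mem_Icc.mpr ⟨hx.1.le, hx.2.le⟩))
    · exact hab
  have hdiv := hNc.div hDc hDpos.ne'
  refine hdiv.congr_deriv ?_
  rw [intervalIntegral.integral_neg, intervalIntegral.integral_neg]
  set N := ∫ x in a..b, x / (heq x + δ t)
  set D := ∫ x in a..b, 1 / (heq x + δ t)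
  set I := ∫ x in a..b, x / (heq x + δ t) / (heq x + δ t)
  set J := ∫ x in a..b, 1 / (heq x + δ t) / (heq x + δ t)
  field_simp
  ring
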